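/- Let f be (2N+1) times continuously differentiable on [0,Z] for an integer Z ≥ 0. Then Σ_{ν=0}^{Z} f(ν) = (f(0)+f(Z))/2 + ∫₀^Z f(u)du + Σ_{j=1}^{N} (B_{2j}/(2j)!)·(f^{(2j-1)}(Z) - f^{(2j-1)}(0)) + (1/(2N+1)!)·∫₀^Z (Σ_{j=0}^{2N+1} C(2N+1,j)·(u-⌊u⌋)^j·B_{2N+1-j})·f^{(2N+1)}(u)du, where B_m are the Bernoulli numbers. -/

import Mathlib

open Real Finset intervalIntegral MeasureTheory Set

noncomputable def Pb (m : ℕ) (x : ℝ) : ℝ :=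
  ∑ j ∈ Finset.range (m + 1), (m.choose j : ℝ) * x ^ j * (bernoulli (m - j) : ℝ)

lemma Pb_continuous (m : ℕ) : Continuous (Pb m) := by
  unfold Pb
  exact continuous_finset_sum _ fun j _ => (continuous_const.mul (continuous_pow j)).mul
    continuous_const

lemma Pb_zero (x : ℝ) : Pb 0 x = 1 := by simp [Pb]

lemma Pb_eval_zero (m : ℕ) : Pb m 0 = (bernoulli m : ℝ) := by
  unfold Pb
  rw [Finset.sum_eq_single 0]
  · simp
  · intro j hj hj0
    simp [zero_pow hj0]
  · simp

lemma Pb_eval_one (m : ℕ) : Pb m 1 = (bernoulli m : ℝ) + (if m = 1 then 1 else 0) := by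
  have h2 : ∑ j ∈ Finset.range (m+1),
      ((m.choose (m - j) : ℝ) * (bernoulli (m - (m - j)) : ℝ))
      = ∑ j ∈ Finset.range (m+1), ((m.choose j : ℝ) * (bernoulli (m - j) : ℝ)) := by
    have := Finset.sum_range_reflect
      (fun j => (m.choose j : ℝ) * (bernoulli (m - j) : ℝ)) (m+1)
    simpa using this
  have h3 : ∑ j ∈ Finset.range (m+1),
      ((m.choose (m - j) : ℝ) * (bernoulli (m - (m - j)) : ℝ))
      = ∑ j ∈ Finset.range (m+1), ((m.choose j : ℝ) * (bernoulli j : ℝ)) := by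
    apply Finset.sum_congr rfl
    intro j hj
    have hj' : j ≤ m := Nat.lt_succ_iff.mp (Finset.mem_range.mp hj)
    rw [Nat.choose_symm hj', Nat.sub_sub_self hj']
  have hq : (∑ k ∈ Finset.range (m+1), (m.choose k : ℚ) * bernoulli k)
      = bernoulli m + (if m = 1 then 1 else 0) := by
    rw [Finset.sum_range_succ, sum_bernoulli]
    simp [add_comm]
  have : Pb m 1 = ∑ j ∈ Finset.range (m+1), ((m.choose j : ℝ) * (bernoulli j : ℝ)) := by
    unfold Pb
    simp only [one_pow, mul_one]
    rw [← h2, h3]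
  rw [this]
  have := congrArg (fun q : ℚ => (q : ℝ)) hq
  push_cast at this ⊢
  convert this using 2
  split <;> simp

lemma Pb_hasDerivAt (m : ℕ) (x : ℝ) :
    HasDerivAt (Pb (m+1)) ((m+1 : ℝ) * Pb m x) x := by
  have h : HasDerivAt (Pb (m+1))
      (∑ j ∈ Finset.range (m+2),
        (((m+1).choose j : ℝ) * ((j : ℝ) * x ^ (j-1)) * (bernoulli (m+1-j) : ℝ))) x := by
    unfold Pb
    apply HasDerivAt.fun_sum
    intro j _
    exact ((hasDerivAt_pow j x).const_mul _).mul_const _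
  convert h using 1
  rw [Finset.sum_range_succ']
  simp only [Nat.cast_zero, zero_mul, mul_zero, add_zero, zero_add]
  unfold Pb
  rw [Finset.mul_sum]
  apply Finset.sum_congr rfl
  intro j hj
  have hkey : ((m+1).choose (j+1) : ℝ) * ((j:ℝ)+1) = ((m:ℝ)+1) * (m.choose j : ℝ) := by
    have h1 := Nat.add_one_mul_choose_eq m j
    have : ((m+1) * m.choose j : ℕ) = ((m+1).choose (j+1) * (j+1) : ℕ) := by
      simpa [Nat.succ_eq_add_one] using h1
    have := congrArg (fun n : ℕ => (n : ℝ)) this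
    push_cast at this
    linarith
  have hsub : m + 1 - (j + 1) = m - j := by omega
  rw [hsub]
  push_cast
  have : ((m:ℝ)+1) * ((m.choose j : ℝ) * x ^ j * ((bernoulli (m - j) : ℚ) : ℝ))
      = (((m:ℝ)+1) * (m.choose j : ℝ)) * (x ^ j * ((bernoulli (m - j) : ℚ) : ℝ)) := by ring
  rw [this, ← hkey]
  ring

lemma ae_ne (c : ℝ) : ∀ᵐ x : ℝ, x ≠ c := by
  rw [MeasureTheory.ae_iff]
  simp only [not_ne_iff, Set.setOf_eq_eq_singleton]
  exact Real.volume_singleton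

lemma floor_congr_ae (m k : ℕ) (G : ℝ → ℝ) :
    (∀ᵐ x : ℝ, x ∈ Set.uIoc (k:ℝ) ((k:ℝ)+1) →
      Pb m (x - ⌊x⌋) * G x = Pb m (x - k) * G x) := by
  filter_upwards [ae_ne ((k:ℝ)+1)] with x hx hmem
  rw [Set.uIoc_of_le (by linarith : (k:ℝ) ≤ (k:ℝ)+1)] at hmem
  have h1 : (k:ℝ) < x := hmem.1
  have h2 : x < (k:ℝ) + 1 := lt_of_le_of_ne hmem.2 hx
  have : ⌊x⌋ = (k:ℤ) := by
    rw [Int.floor_eq_iff]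
    constructor
    · push_cast; linarith
    · push_cast; linarith
  rw [this]
  norm_num

lemma floor_integral_eq (m k : ℕ) (G : ℝ → ℝ) :
    ∫ u in (k:ℝ)..((k:ℝ)+1), Pb m (u - ⌊u⌋) * G u
      = ∫ u in (k:ℝ)..((k:ℝ)+1), Pb m (u - k) * G u :=
  intervalIntegral.integral_congr_ae (floor_congr_ae m k G)

lemma floor_intervalIntegrable (m k : ℕ) {G : ℝ → ℝ}
    (hG : ContinuousOn G (Set.Icc (k:ℝ) ((k:ℝ)+1))) :
    IntervalIntegrable (fun u => Pb m (u - ⌊u⌋) * G u) volume (k:ℝ) ((k:ℝ)+1) := by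
  have hk1 : (k:ℝ) ≤ (k:ℝ)+1 := by linarith
  have hbase : IntervalIntegrable (fun u => Pb m (u - k) * G u) volume (k:ℝ) ((k:ℝ)+1) :=
    ((((Pb_continuous m).comp (continuous_id.sub continuous_const)).continuousOn.mul hG).mono
      (by rw [Set.uIcc_of_le hk1])).intervalIntegrable
  apply hbase.congr_ae
  filter_upwards [ae_restrict_mem measurableSet_uIoc,
    ae_restrict_of_ae (floor_congr_ae m k G)] with x hx h2
  exact (h2 hx).symm

section
variable {N Z : ℕ} {f : ℝ → ℝ}

/-- per-interval integration by parts -/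
lemma step_lemma (hZ : 1 ≤ Z) (hf : ContDiffOn ℝ (2 * N + 1) f (Set.Icc 0 (Z : ℝ)))
    (m k : ℕ) (hm : m + 1 ≤ 2 * N + 1) (hk : k < Z) :
    ∫ u in (k:ℝ)..((k:ℝ)+1),
        Pb m (u - k) * iteratedDerivWithin m f (Set.Icc 0 (Z:ℝ)) u
      = Pb (m+1) 1 / (m+1) * iteratedDerivWithin m f (Set.Icc 0 (Z:ℝ)) ((k:ℝ)+1)
        - (bernoulli (m+1) : ℝ) / (m+1) * iteratedDerivWithin m f (Set.Icc 0 (Z:ℝ)) (k:ℝ)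
        - (1/((m:ℝ)+1)) * ∫ u in (k:ℝ)..((k:ℝ)+1),
            Pb (m+1) (u - k) * iteratedDerivWithin (m+1) f (Set.Icc 0 (Z:ℝ)) u := by
  set s : Set ℝ := Set.Icc 0 (Z:ℝ) with hs_def
  set g : ℕ → ℝ → ℝ := fun n => iteratedDerivWithin n f s with hg_def
  have hZ0 : (0:ℝ) < (Z:ℝ) := by exact_mod_cast hZ
  have hs : UniqueDiffOn ℝ s := uniqueDiffOn_Icc hZ0
  have hsub : Set.Icc (k:ℝ) ((k:ℝ)+1) ⊆ s := by
    apply Set.Icc_subset_Icc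
    · positivity
    · have : (k:ℝ) + 1 ≤ (Z:ℝ) := by exact_mod_cast hk
      linarith
  have hioo : Set.Ioo (k:ℝ) ((k:ℝ)+1) ⊆ Set.Ioo 0 (Z:ℝ) := by
    apply Set.Ioo_subset_Ioo
    · positivity
    · exact_mod_cast hk
  have hcontm : ContinuousOn (g m) s :=
    hf.continuousOn_iteratedDerivWithin (by exact_mod_cast Nat.le_of_succ_le hm) hs
  have hcontm1 : ContinuousOn (g (m+1)) s :=
    hf.continuousOn_iteratedDerivWithin (by exact_mod_cast hm) hs
  have hderiv : ∀ x ∈ Set.Ioo (0:ℝ) (Z:ℝ), HasDerivAt (g m) (g (m+1) x) x := by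
    intro x hx
    have hx' : x ∈ s := Set.Ioo_subset_Icc_self hx
    have hd : DifferentiableOn ℝ (g m) s :=
      hf.differentiableOn_iteratedDerivWithin (by exact_mod_cast Nat.lt_of_succ_le hm) hs
    have h1 : HasDerivWithinAt (g m) (derivWithin (g m) s x) s x :=
      (hd x hx').hasDerivWithinAt
    have h2 : g (m+1) x = derivWithin (g m) s x := by
      rw [hg_def]
      exact congrFun iteratedDerivWithin_succ x
    rw [h2]
    exact h1.hasDerivAt (Icc_mem_nhds hx.1 hx.2)
  -- the primitive
  set F : ℝ → ℝ := fun u => Pb (m+1) (u - k) / ((m:ℝ)+1) * g m u with hF_def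
  set F' : ℝ → ℝ := fun u => Pb m (u - k) * g m u
    + Pb (m+1) (u - k) / ((m:ℝ)+1) * g (m+1) u with hF'_def
  have hm1 : ((m:ℝ)+1) ≠ 0 := by positivity
  have hk1 : (k:ℝ) ≤ (k:ℝ) + 1 := by linarith
  have hPbc : ∀ n : ℕ, Continuous fun u : ℝ => Pb n (u - k) := fun n =>
    (Pb_continuous n).comp (continuous_id.sub continuous_const)
  have hFcont : ContinuousOn F (Set.Icc (k:ℝ) ((k:ℝ)+1)) :=
    (((hPbc (m+1)).continuousOn.div_const _).mul (hcontm.mono hsub))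
  have hF'cont : ContinuousOn F' (Set.Icc (k:ℝ) ((k:ℝ)+1)) :=
    (((hPbc m).continuousOn.mul (hcontm.mono hsub)).add
      (((hPbc (m+1)).continuousOn.div_const _).mul (hcontm1.mono hsub)))
  have hFderiv : ∀ x ∈ Set.Ioo (k:ℝ) ((k:ℝ)+1), HasDerivWithinAt F (F' x) (Set.Ioi x) x := by
    intro x hx
    have h1 : HasDerivAt (fun u : ℝ => Pb (m+1) (u - k)) (((m:ℝ)+1) * Pb m (x - k)) x := by
      have := (Pb_hasDerivAt m (x - k)).comp x ((hasDerivAt_id x).sub_const (k:ℝ))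
      simpa [Function.comp_def] using this
    have h2 := ((h1.div_const ((m:ℝ)+1)).mul (hderiv x (hioo hx)))
    have : F' x = ((m:ℝ)+1) * Pb m (x - k) / ((m:ℝ)+1) * g m x
        + Pb (m+1) (x - k) / ((m:ℝ)+1) * g (m+1) x := by
      rw [hF'_def]
      field_simp
    rw [this]
    exact h2.hasDerivWithinAt
  have hF'int : IntervalIntegrable F' volume (k:ℝ) ((k:ℝ)+1) :=
    (hF'cont.mono (by rw [Set.uIcc_of_le hk1])).intervalIntegrable
  have hftc : ∫ u in (k:ℝ)..((k:ℝ)+1), F' u = F ((k:ℝ)+1) - F (k:ℝ) :=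
    intervalIntegral.integral_eq_sub_of_hasDeriv_right_of_le hk1 hFcont hFderiv hF'int
  have hint1 : IntervalIntegrable (fun u => Pb m (u - k) * g m u) volume (k:ℝ) ((k:ℝ)+1) :=
    (((hPbc m).continuousOn.mul (hcontm.mono hsub)).mono
      (by rw [Set.uIcc_of_le hk1])).intervalIntegrable
  have hint2 : IntervalIntegrable (fun u => Pb (m+1) (u - k) / ((m:ℝ)+1) * g (m+1) u)
      volume (k:ℝ) ((k:ℝ)+1) :=
    ((((hPbc (m+1)).continuousOn.div_const _).mul (hcontm1.mono hsub)).mono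
      (by rw [Set.uIcc_of_le hk1])).intervalIntegrable
  have hsplit : ∫ u in (k:ℝ)..((k:ℝ)+1), F' u
      = (∫ u in (k:ℝ)..((k:ℝ)+1), Pb m (u - k) * g m u)
        + ∫ u in (k:ℝ)..((k:ℝ)+1), Pb (m+1) (u - k) / ((m:ℝ)+1) * g (m+1) u := by
    rw [hF'_def]
    exact intervalIntegral.integral_add hint1 hint2
  have hFk1 : F ((k:ℝ)+1) = Pb (m+1) 1 / ((m:ℝ)+1) * g m ((k:ℝ)+1) := by
    rw [hF_def]; norm_num
  have hFk : F (k:ℝ) = (bernoulli (m+1) : ℝ) / ((m:ℝ)+1) * g m (k:ℝ) := by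
    rw [hF_def]; simp [Pb_eval_zero]
  have hpull : ∫ u in (k:ℝ)..((k:ℝ)+1), Pb (m+1) (u - k) / ((m:ℝ)+1) * g (m+1) u
      = (1/((m:ℝ)+1)) * ∫ u in (k:ℝ)..((k:ℝ)+1), Pb (m+1) (u - k) * g (m+1) u := by
    rw [← intervalIntegral.integral_const_mul]
    apply intervalIntegral.integral_congr
    intro u _
    field_simp
  have hcast : ((m:ℝ)+1) = ((m+1 : ℕ) : ℝ) := by push_cast; ring
  rw [hsplit, hpull] at hftc
  rw [hFk1, hFk] at hftc
  push_cast
  linarith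

lemma J_eq_sum (hZ : 1 ≤ Z) (hf : ContDiffOn ℝ (2 * N + 1) f (Set.Icc 0 (Z : ℝ)))
    (m : ℕ) (hm : m ≤ 2 * N + 1) :
    (∫ u in (0:ℝ)..(Z:ℝ), Pb m (u - ⌊u⌋) * iteratedDerivWithin m f (Set.Icc 0 (Z:ℝ)) u)
      = ∑ k ∈ Finset.range Z, ∫ u in (k:ℝ)..((k:ℝ)+1),
          Pb m (u - k) * iteratedDerivWithin m f (Set.Icc 0 (Z:ℝ)) u := by
  set s : Set ℝ := Set.Icc 0 (Z:ℝ) with hs_def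
  set g : ℝ → ℝ := iteratedDerivWithin m f s with hg_def
  have hZ0 : (0:ℝ) < (Z:ℝ) := by exact_mod_cast hZ
  have hs : UniqueDiffOn ℝ s := uniqueDiffOn_Icc hZ0
  have hcont : ContinuousOn g s :=
    hf.continuousOn_iteratedDerivWithin (by exact_mod_cast hm) hs
  have hsub : ∀ k : ℕ, k < Z → Set.Icc (k:ℝ) ((k:ℝ)+1) ⊆ s := by
    intro k hk
    apply Set.Icc_subset_Icc
    · positivity
    · have : (k:ℝ) + 1 ≤ (Z:ℝ) := by exact_mod_cast hk
      linarith
  have hintk : ∀ k : ℕ, k < Z →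
      IntervalIntegrable (fun u => Pb m (u - ⌊u⌋) * g u) volume (k:ℝ) ((k:ℝ)+1) := by
    intro k hk
    exact floor_intervalIntegrable m k (hcont.mono (hsub k hk))
  have := intervalIntegral.sum_integral_adjacent_intervals (a := fun k : ℕ => (k:ℝ))
    (f := fun u => Pb m (u - ⌊u⌋) * g u) (n := Z) (μ := volume)
    (by intro k hk; exact_mod_cast hintk k hk)
  push_cast at this
  rw [← this]
  apply Finset.sum_congr rfl
  intro k _
  exact_mod_cast floor_integral_eq m k g


lemma base_identity (hZ : 1 ≤ Z) (hf : ContDiffOn ℝ (2 * N + 1) f (Set.Icc 0 (Z : ℝ))) :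
    ∑ ν ∈ Finset.range (Z + 1), f ν
      = (f 0 + f Z) / 2 + (∫ u in (0:ℝ)..(Z:ℝ), f u)
        + ∫ u in (0:ℝ)..(Z:ℝ),
            Pb 1 (u - ⌊u⌋) * iteratedDerivWithin 1 f (Set.Icc 0 (Z:ℝ)) u := by
  set s : Set ℝ := Set.Icc 0 (Z:ℝ) with hs_def
  have h0 : iteratedDerivWithin 0 f s = f := iteratedDerivWithin_zero
  -- J 0 via sum
  have hJ0 := J_eq_sum hZ hf 0 (by omega)
  have hJ1 := J_eq_sum hZ hf 1 (by omega)
  -- each interval for m = 0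
  have hstep : ∀ k ∈ Finset.range Z,
      (∫ u in (k:ℝ)..((k:ℝ)+1), Pb 0 (u - k) * iteratedDerivWithin 0 f s u)
      = (1/2) * f ((k:ℝ)+1) + (1/2) * f (k:ℝ)
        - ∫ u in (k:ℝ)..((k:ℝ)+1), Pb 1 (u - k) * iteratedDerivWithin 1 f s u := by
    intro k hk
    have := step_lemma hZ hf 0 k (by omega) (Finset.mem_range.mp hk)
    rw [Pb_eval_one 1] at this
    simp only [h0] at this ⊢
    norm_num at this ⊢
    linarith [this]
  -- LHS of J 0 : ∫ Pb 0 * f = ∫ f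
  have hJ0' : (∫ u in (0:ℝ)..(Z:ℝ), Pb 0 (u - ⌊u⌋) * iteratedDerivWithin 0 f s u)
      = ∫ u in (0:ℝ)..(Z:ℝ), f u := by
    rw [h0]
    apply intervalIntegral.integral_congr
    intro u _
    simp [Pb_zero]
  rw [Finset.sum_congr rfl hstep] at hJ0
  rw [Finset.sum_sub_distrib, Finset.sum_add_distrib] at hJ0
  rw [← hJ1] at hJ0
  rw [hJ0'] at hJ0
  have hsum1 : ∑ k ∈ Finset.range Z, (1/2 : ℝ) * f ((k:ℝ)+1)
      = (∑ ν ∈ Finset.range (Z+1), (1/2 : ℝ) * f ν) - (1/2) * f 0 := by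
    rw [Finset.sum_range_succ' (fun ν => (1/2 : ℝ) * f ν) Z]
    push_cast
    ring
  have hsum2 : ∑ k ∈ Finset.range Z, (1/2 : ℝ) * f (k:ℝ)
      = (∑ ν ∈ Finset.range (Z+1), (1/2 : ℝ) * f ν) - (1/2) * f Z := by
    rw [Finset.sum_range_succ (fun ν => (1/2 : ℝ) * f ν) Z]
    ring
  rw [hsum1, hsum2] at hJ0
  rw [← Finset.mul_sum] at hJ0
  linarith [hJ0]

lemma J_recurrence (hZ : 1 ≤ Z) (hf : ContDiffOn ℝ (2 * N + 1) f (Set.Icc 0 (Z : ℝ)))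
    (m : ℕ) (hm1 : 1 ≤ m) (hm : m + 1 ≤ 2 * N + 1) :
    (∫ u in (0:ℝ)..(Z:ℝ), Pb m (u - ⌊u⌋) * iteratedDerivWithin m f (Set.Icc 0 (Z:ℝ)) u)
      = (bernoulli (m+1) : ℝ) / (m+1)
          * (iteratedDerivWithin m f (Set.Icc 0 (Z:ℝ)) (Z:ℝ)
             - iteratedDerivWithin m f (Set.Icc 0 (Z:ℝ)) 0)
        - (1/((m:ℝ)+1)) * ∫ u in (0:ℝ)..(Z:ℝ),
            Pb (m+1) (u - ⌊u⌋) * iteratedDerivWithin (m+1) f (Set.Icc 0 (Z:ℝ)) u := by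
  set s : Set ℝ := Set.Icc 0 (Z:ℝ) with hs_def
  set g : ℝ → ℝ := iteratedDerivWithin m f s with hg_def
  have hP1 : Pb (m+1) 1 = (bernoulli (m+1) : ℝ) := by
    rw [Pb_eval_one]
    simp [Nat.succ_ne_zero, show m + 1 ≠ 1 by omega, show m ≠ 0 by omega]
  have hJ := J_eq_sum hZ hf m (by omega)
  have hJ1 := J_eq_sum hZ hf (m+1) (by omega)
  have hstep : ∀ k ∈ Finset.range Z,
      (∫ u in (k:ℝ)..((k:ℝ)+1), Pb m (u - k) * iteratedDerivWithin m f s u)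
      = ((bernoulli (m+1) : ℝ) / (m+1) * g ((k:ℝ)+1)
          - (bernoulli (m+1) : ℝ) / (m+1) * g (k:ℝ))
        - (1/((m:ℝ)+1)) * ∫ u in (k:ℝ)..((k:ℝ)+1),
            Pb (m+1) (u - k) * iteratedDerivWithin (m+1) f s u := by
    intro k hk
    have := step_lemma hZ hf m k hm (Finset.mem_range.mp hk)
    rw [hP1] at this
    push_cast at this ⊢
    linarith [this]
  rw [Finset.sum_congr rfl hstep, Finset.sum_sub_distrib] at hJ
  have htel : ∑ k ∈ Finset.range Z,
      ((bernoulli (m+1) : ℝ) / (m+1) * g ((k:ℝ)+1)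
        - (bernoulli (m+1) : ℝ) / (m+1) * g (k:ℝ))
      = (bernoulli (m+1) : ℝ) / (m+1) * (g (Z:ℝ) - g 0) := by
    have := Finset.sum_range_sub (fun k : ℕ => (bernoulli (m+1) : ℝ) / (m+1) * g (k:ℝ)) Z
    push_cast at this ⊢
    rw [this]
    push_cast
    ring
  rw [htel, ← Finset.mul_sum, ← hJ1] at hJ
  rw [hJ]

lemma main_ind (hZ : 1 ≤ Z) (hf : ContDiffOn ℝ (2 * N + 1) f (Set.Icc 0 (Z : ℝ)))
    (m : ℕ) (hm1 : 1 ≤ m) (hm : m ≤ 2 * N + 1) :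
    ∑ ν ∈ Finset.range (Z + 1), f ν
      = (f 0 + f Z) / 2 + (∫ u in (0:ℝ)..(Z:ℝ), f u)
        + (∑ j ∈ Finset.Icc 2 m, (-1 : ℝ)^j * (bernoulli j : ℝ) / (j.factorial)
            * (iteratedDerivWithin (j-1) f (Set.Icc 0 (Z:ℝ)) (Z:ℝ)
               - iteratedDerivWithin (j-1) f (Set.Icc 0 (Z:ℝ)) 0))
        + ((-1 : ℝ)^(m+1) / (m.factorial))
            * ∫ u in (0:ℝ)..(Z:ℝ),
                Pb m (u - ⌊u⌋) * iteratedDerivWithin m f (Set.Icc 0 (Z:ℝ)) u := by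
  induction m, hm1 using Nat.le_induction with
  | base =>
    have h := base_identity hZ hf
    rw [h]
    norm_num
  | succ m hm1' ih =>
    have h := ih (by omega)
    rw [J_recurrence hZ hf m hm1' (by omega)] at h
    rw [h, Finset.sum_Icc_succ_top (by omega : 2 ≤ m + 1)]
    have hfac : ((m+1).factorial : ℝ) = (m.factorial : ℝ) * ((m:ℝ)+1) := by
      rw [Nat.factorial_succ]; push_cast; ring
    have hfne : (m.factorial : ℝ) ≠ 0 := by positivity
    have hmne : ((m:ℝ)+1) ≠ 0 := by positivity
    have hsucc : (m + 1) - 1 = m := rfl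
    rw [hsucc, hfac]
    push_cast
    field_simp
    ring


lemma reindex_sum (M : ℕ) (t : ℕ → ℝ) (h0 : ∀ j, Odd j → 3 ≤ j → t j = 0) :
    ∑ j ∈ Finset.Icc 2 (2*M+1), t j = ∑ i ∈ Finset.Icc 1 M, t (2*i) := by
  have hinj : Set.InjOn (fun i => 2*i) (Finset.Icc 1 M) := fun a _ b _ h => by dsimp at h; omega
  rw [← Finset.sum_image hinj]
  apply (Finset.sum_subset ?_ ?_).symm
  · intro x hx
    obtain ⟨i, hi, rfl⟩ := Finset.mem_image.mp hx
    have := Finset.mem_Icc.mp hi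
    exact Finset.mem_Icc.mpr (by constructor <;> omega)
  · intro x hx hnx
    have hx' := Finset.mem_Icc.mp hx
    rcases Nat.even_or_odd x with he | ho
    · exfalso
      apply hnx
      obtain ⟨i, hi⟩ := he
      exact Finset.mem_image.mpr ⟨i, Finset.mem_Icc.mpr ⟨by omega, by omega⟩, by omega⟩
    · obtain ⟨c, hc⟩ := ho
      exact h0 x ⟨c, hc⟩ (by omega)

end

/-- Generalized Euler summation (Euler–Maclaurin) formula. -/
theorem euler_maclaurin_summation (N Z : ℕ) (f : ℝ → ℝ)
    (hf : ContDiffOn ℝ (2 * N + 1) f (Set.Icc 0 (Z : ℝ))) :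
    ∑ ν ∈ Finset.range (Z + 1), f ν =
      (f 0 + f Z) / 2 + (∫ u in (0:ℝ)..(Z : ℝ), f u)
      + ∑ j ∈ Finset.Icc 1 N,
          ((bernoulli (2 * j) : ℝ) / (Nat.factorial (2 * j)))
            * (iteratedDerivWithin (2 * j - 1) f (Set.Icc 0 (Z : ℝ)) Z
               - iteratedDerivWithin (2 * j - 1) f (Set.Icc 0 (Z : ℝ)) 0)
      + (1 / (Nat.factorial (2 * N + 1)))
          * ∫ u in (0:ℝ)..(Z : ℝ),
              (∑ j ∈ Finset.range (2 * N + 2),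
                (Nat.choose (2 * N + 1) j : ℝ) * (u - ⌊u⌋) ^ j
                  * (bernoulli (2 * N + 1 - j) : ℝ))
                * iteratedDerivWithin (2 * N + 1) f (Set.Icc 0 (Z : ℝ)) u := by
  rcases Nat.eq_zero_or_pos Z with hZ0 | hZ
  · subst hZ0
    simp only [Nat.cast_zero, Finset.range_one, Finset.sum_singleton, Nat.cast_zero,
      intervalIntegral.integral_same, sub_self, mul_zero, Finset.sum_const_zero,
      add_zero, zero_add]
    norm_num
  · have h := main_ind hZ hf (2*N+1) (by omega) le_rfl
    rw [h]
    have hpow : ((-1 : ℝ))^(2*N+1+1) = 1 := by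
      rw [show 2*N+1+1 = 2*(N+1) by ring, pow_mul]
      norm_num
    have hsum : ∑ j ∈ Finset.Icc 2 (2*N+1), (-1 : ℝ)^j * (bernoulli j : ℝ) / (j.factorial)
            * (iteratedDerivWithin (j-1) f (Set.Icc 0 (Z:ℝ)) (Z:ℝ)
               - iteratedDerivWithin (j-1) f (Set.Icc 0 (Z:ℝ)) 0)
        = ∑ j ∈ Finset.Icc 1 N,
          ((bernoulli (2 * j) : ℝ) / (Nat.factorial (2 * j)))
            * (iteratedDerivWithin (2 * j - 1) f (Set.Icc 0 (Z : ℝ)) Z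
               - iteratedDerivWithin (2 * j - 1) f (Set.Icc 0 (Z : ℝ)) 0) := by
      rw [reindex_sum N _ ?_]
      · apply Finset.sum_congr rfl
        intro i _
        have : ((-1 : ℝ))^(2*i) = 1 := by rw [pow_mul]; norm_num
        rw [this]
        ring
      · intro j hodd h3
        have hb : bernoulli j = 0 := by
          rw [bernoulli_eq_bernoulli'_of_ne_one (by omega)]
          exact bernoulli'_eq_zero_of_odd hodd (by omega)
        rw [hb]
        norm_num
    have hint : (∫ u in (0:ℝ)..(Z:ℝ),
          Pb (2*N+1) (u - ⌊u⌋) * iteratedDerivWithin (2*N+1) f (Set.Icc 0 (Z:ℝ)) u)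
        = ∫ u in (0:ℝ)..(Z : ℝ),
              (∑ j ∈ Finset.range (2 * N + 2),
                (Nat.choose (2 * N + 1) j : ℝ) * (u - ⌊u⌋) ^ j
                  * (bernoulli (2 * N + 1 - j) : ℝ))
                * iteratedDerivWithin (2 * N + 1) f (Set.Icc 0 (Z : ℝ)) u := by
      apply intervalIntegral.integral_congr
      intro u _
      show Pb (2*N+1) (u - ⌊u⌋) * _ = _
      unfold Pb
      norm_num
    rw [hsum, hpow, hint]
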